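/- Let n ≥ 2 and let σ be a permutation of {1, …, n−1}. Then there exist k ≥ 1 and a finite sequence p_0, p_1, …, p_k of natural numbers such that p_0 = 1, p_k = n, p_1, …, p_{k−1} all lie in {1, …, n−1}, and p_r = σ(p_{r−1}) + 1 for each r ∈ {1, …, k}. -/
import Mathlib


/-- **Lemma 4.2** (Leinster). Let `n ≥ 2` and let `σ` be a permutation of
`{1, …, n-1}`.  Then there exist `k ≥ 1` and `p₀, …, p_k` with `p₀ = 1`,
`p_k = n`, `p₁, …, p_{k-1} ∈ {1, …, n-1}`, and `p_r = σ(p_{r-1}) + 1` for each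
`r ∈ {1, …, k}`. -/
theorem stmt_17 (n : ℕ) (hn : 2 ≤ n) (σ : ℕ → ℕ)
    (hσ : Set.BijOn σ (Set.Icc 1 (n - 1)) (Set.Icc 1 (n - 1))) :
    ∃ (k : ℕ), 1 ≤ k ∧ ∃ p : ℕ → ℕ,
      p 0 = 1 ∧ p k = n ∧
      (∀ r, 1 ≤ r → r ≤ k - 1 → p r ∈ Set.Icc 1 (n - 1)) ∧
      (∀ r, 1 ≤ r → r ≤ k → p r = σ (p (r - 1)) + 1) := by
  set f : ℕ → ℕ := fun x => σ x + 1 with hf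
  set p : ℕ → ℕ := fun r => f^[r] 1 with hp
  have hp0 : p 0 = 1 := rfl
  have hpsucc : ∀ r, p (r + 1) = f (p r) := by
    intro r; simp [hp, Function.iterate_succ_apply']
  -- invariant: if orbit up to r avoids n, it stays in Icc 1 (n-1)
  have inv : ∀ r, (∀ i, i ≤ r → p i ≠ n) → p r ∈ Set.Icc 1 (n - 1) := by
    intro r
    induction r with
    | zero => intro _; simp [hp0]; omega
    | succ r ih =>
      intro h
      have hr : p r ∈ Set.Icc 1 (n - 1) := ih (fun i hi => h i (by omega))
      have hσr := hσ.mapsTo hr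
      simp only [Set.mem_Icc] at hσr ⊢
      have hne := h (r + 1) le_rfl
      rw [hpsucc r] at hne ⊢
      simp only [hf] at hne ⊢
      omega
  -- the orbit hits n
  have hit : ∃ k, p k = n := by
    by_contra h
    push_neg at h
    have hall : ∀ r, p r ∈ Set.Icc 1 (n - 1) := fun r => inv r (fun i _ => h i)
    -- pigeonhole
    have hmaps : ∀ i ∈ Finset.range n, p i ∈ Finset.Icc 1 (n - 1) := by
      intro i _
      have := hall i; simp only [Set.mem_Icc] at this
      simpa [Finset.mem_Icc] using this
    have hcard : (Finset.Icc 1 (n - 1)).card < (Finset.range n).card := by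
      simp [Nat.card_Icc]; omega
    obtain ⟨i, hi, j, hj, hij, heq⟩ :=
      Finset.exists_ne_map_eq_of_card_lt_of_maps_to hcard hmaps
    wlog hlt : i < j generalizing i j
    · exact this j hj i hi hij.symm heq.symm (by omega)
    -- injectivity shifts the collision back to index 0
    have shift : ∀ i d, p i = p (i + d) → p 0 = p d := by
      intro i
      induction i with
      | zero => intro d h; simpa using h
      | succ i ih =>
        intro d h
        have h1 : p (i + 1) = f (p i) := hpsucc i
        have h2 : p (i + 1 + d) = f (p (i + d)) := by
          have : i + 1 + d = (i + d) + 1 := by omega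
          rw [this, hpsucc]
        rw [h1, h2] at h
        simp only [hf, Nat.add_right_cancel_iff] at h
        exact ih d (hσ.injOn (hall i) (hall (i + d)) h)
    have h0 : p 0 = p (j - i) := by
      apply shift i
      rw [show i + (j - i) = j by omega]; exact heq
    have hd1 : 1 ≤ j - i := by omega
    have hstep : p (j - i) = f (p (j - i - 1)) := by
      have := hpsucc (j - i - 1)
      rwa [show j - i - 1 + 1 = j - i by omega] at this
    rw [hstep] at h0
    have hge : 1 ≤ σ (p (j - i - 1)) := (hσ.mapsTo (hall (j - i - 1))).1
    simp only [hf, hp0] at h0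
    omega
  -- take minimal k
  have h0n : p 0 ≠ n := by rw [hp0]; omega
  classical
  let k := Nat.find hit
  have hk : p k = n := Nat.find_spec hit
  have hkmin : ∀ m, m < k → p m ≠ n := fun m hm => Nat.find_min hit hm
  have hk1 : 1 ≤ k := by
    rcases Nat.eq_zero_or_pos k with h | h
    · exact absurd (h ▸ hk) h0n
    · exact h
  refine ⟨k, hk1, p, hp0, hk, ?_, ?_⟩
  · intro r hr1 hr2
    exact inv r (fun i hi => hkmin i (by omega))
  · intro r hr1 _
    rw [show r = (r - 1) + 1 by omega, hpsucc]
    simp [hf]
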